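/- For s, t ∈ (-1,1) with the kernel entries K₁₁(s,t) = (s-t)/(√((1-s²)(1-t²))(1-st)²), K₁₂(s,t) = √((1-t²)/(1-s²))/(1-st), and K₂₂(s,t) = sgn(t-s)·arcsin c(s,t) with c(s,t) = √((1-s²)(1-t²))/(1-st), one has for s ≠ t: ∂K₂₂/∂s (s,t) = K₁₂(s,t) and ∂²K₂₂/∂s∂t (s,t) = K₁₁(s,t). -/

import Mathlib

private lemma aux_deriv (a b : ℝ) (ha : a ∈ Set.Ioo (-1 : ℝ) 1)
    (hb : b ∈ Set.Ioo (-1 : ℝ) 1) :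
    HasDerivAt (fun u : ℝ => Real.sqrt (1 - u ^ 2) / (1 - u * b))
      ((b - a) / (Real.sqrt (1 - a ^ 2) * (1 - a * b) ^ 2)) a := by
  obtain ⟨ha1, ha2⟩ := ha
  obtain ⟨hb1, hb2⟩ := hb
  have hA : (0 : ℝ) < 1 - a ^ 2 := by nlinarith
  have hS : (0 : ℝ) < Real.sqrt (1 - a ^ 2) := Real.sqrt_pos.mpr hA
  have hab : (0 : ℝ) < 1 - a * b := by nlinarith
  have hsq : Real.sqrt (1 - a ^ 2) ^ 2 = 1 - a ^ 2 := Real.sq_sqrt hA.le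
  have h1 : HasDerivAt (fun u : ℝ => 1 - u ^ 2) (-(2 * a)) a := by
    simpa using ((hasDerivAt_pow 2 a).const_sub 1)
  have h2 : HasDerivAt (fun u : ℝ => Real.sqrt (1 - u ^ 2))
      (-a / Real.sqrt (1 - a ^ 2)) a := by
    have := h1.sqrt (ne_of_gt hA)
    convert this using 1
    field_simp
  have h3 : HasDerivAt (fun u : ℝ => 1 - u * b) (-b) a := by
    simpa using ((hasDerivAt_mul_const b).const_sub 1)
  have := h2.div h3 (ne_of_gt hab)
  refine this.congr_deriv ?_
  rw [← div_div]
  congr 1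
  field_simp
  nlinarith [hsq, hS, hab]

theorem kernel_derivatives (s t : ℝ)
    (hs : s ∈ Set.Ioo (-1 : ℝ) 1) (ht : t ∈ Set.Ioo (-1 : ℝ) 1) (hst : s ≠ t) :
    HasDerivAt
      (fun u : ℝ => Real.sign (t - u)
        * Real.arcsin (Real.sqrt ((1 - u ^ 2) * (1 - t ^ 2)) / (1 - u * t)))
      (Real.sqrt ((1 - t ^ 2) / (1 - s ^ 2)) / (1 - s * t)) s ∧
    HasDerivAt
      (fun v : ℝ => Real.sqrt ((1 - v ^ 2) / (1 - s ^ 2)) / (1 - s * v))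
      ((s - t) / (Real.sqrt ((1 - s ^ 2) * (1 - t ^ 2)) * (1 - s * t) ^ 2)) t := by
  obtain ⟨hs1, hs2⟩ := hs
  obtain ⟨ht1, ht2⟩ := ht
  have hS : (0 : ℝ) < 1 - s ^ 2 := by nlinarith
  have hT : (0 : ℝ) < 1 - t ^ 2 := by nlinarith
  have hsS : (0 : ℝ) < Real.sqrt (1 - s ^ 2) := Real.sqrt_pos.mpr hS
  have hsT : (0 : ℝ) < Real.sqrt (1 - t ^ 2) := Real.sqrt_pos.mpr hT
  have hst' : (0 : ℝ) < 1 - s * t := by nlinarith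
  have hsqS : Real.sqrt (1 - s ^ 2) ^ 2 = 1 - s ^ 2 := Real.sq_sqrt hS.le
  have hsqT : Real.sqrt (1 - t ^ 2) ^ 2 = 1 - t ^ 2 := Real.sq_sqrt hT.le
  constructor
  · -- first part
    set ε : ℝ := Real.sign (t - s) with hε
    set c : ℝ := Real.sqrt (1 - t ^ 2) * (Real.sqrt (1 - s ^ 2) / (1 - s * t)) with hc
    have hc0 : 0 ≤ c := by positivity
    have hc2 : c ^ 2 < 1 := by
      have : c ^ 2 = (1 - t ^ 2) * (1 - s ^ 2) / (1 - s * t) ^ 2 := by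
        rw [hc, mul_pow, div_pow, hsqS, hsqT]; ring
      rw [this, div_lt_one (by positivity)]
      have h0 : 0 < (s - t) ^ 2 := sq_pos_of_ne_zero (sub_ne_zero.mpr hst)
      nlinarith
    have hc1 : c < 1 := by nlinarith
    have hcne1 : c ≠ 1 := ne_of_lt hc1
    have hcnem1 : c ≠ -1 := by intro h; rw [h] at hc0; linarith
    -- inner function derivative
    have hinner : HasDerivAt
        (fun u : ℝ => Real.sqrt (1 - t ^ 2) * (Real.sqrt (1 - u ^ 2) / (1 - u * t)))
        (Real.sqrt (1 - t ^ 2) * ((t - s) / (Real.sqrt (1 - s ^ 2) * (1 - s * t) ^ 2))) s :=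
      (aux_deriv s t ⟨hs1, hs2⟩ ⟨ht1, ht2⟩).const_mul _
    have harcsin := (Real.hasDerivAt_arcsin hcnem1 hcne1).comp s hinner
    have hF := harcsin.const_mul ε
    -- 1 - c ^ 2 = ((s - t) / (1 - s * t)) ^ 2
    have h1c : 1 - c ^ 2 = ((s - t) / (1 - s * t)) ^ 2 := by
      have : c ^ 2 = (1 - t ^ 2) * (1 - s ^ 2) / (1 - s * t) ^ 2 := by
        rw [hc, mul_pow, div_pow, hsqS, hsqT]; ring
      rw [this, div_pow]
      rw [eq_div_iff (by positivity), sub_mul, div_mul_cancel₀ _ (by positivity)]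
      ring
    have hsqrt1c : Real.sqrt (1 - c ^ 2) = |s - t| / (1 - s * t) := by
      rw [h1c, Real.sqrt_sq_eq_abs, abs_div, abs_of_pos hst']
    -- derivative value equality
    have hval : ε * (1 / Real.sqrt (1 - c ^ 2) *
        (Real.sqrt (1 - t ^ 2) * ((t - s) / (Real.sqrt (1 - s ^ 2) * (1 - s * t) ^ 2))))
        = Real.sqrt ((1 - t ^ 2) / (1 - s ^ 2)) / (1 - s * t) := by
      rw [hsqrt1c, Real.sqrt_div hT.le]
      rcases lt_or_gt_of_ne hst with h | h
      · rw [hε, Real.sign_of_pos (by linarith : (0:ℝ) < t - s), abs_of_neg (by linarith : s - t < 0)]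
        have h1 : t - s ≠ 0 := by intro h'; apply hst; linarith
        field_simp [h1]
        ring
      · rw [hε, Real.sign_of_neg (by linarith : t - s < 0), abs_of_pos (by linarith : (0:ℝ) < s - t)]
        have h1 : s - t ≠ 0 := sub_ne_zero.mpr hst
        field_simp [h1]
        ring
    -- eventual equality of functions
    have hev : (fun u : ℝ => Real.sign (t - u)
        * Real.arcsin (Real.sqrt ((1 - u ^ 2) * (1 - t ^ 2)) / (1 - u * t)))
        =ᶠ[nhds s] (fun u : ℝ => ε *
          Real.arcsin (Real.sqrt (1 - t ^ 2) * (Real.sqrt (1 - u ^ 2) / (1 - u * t)))) := by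
      have hmem : Set.Ioo (-1 : ℝ) 1 ∈ nhds s := Ioo_mem_nhds hs1 hs2
      rcases lt_or_gt_of_ne hst with h | h
      · have hmem2 : Set.Iio t ∈ nhds s := Iio_mem_nhds h
        filter_upwards [hmem, hmem2] with u hu hu2
        have hU : (0 : ℝ) ≤ 1 - u ^ 2 := by nlinarith [hu.1, hu.2]
        rw [Real.sign_of_pos (by simpa using hu2 : (0:ℝ) < t - u), hε,
          Real.sign_of_pos (by linarith : (0:ℝ) < t - s), Real.sqrt_mul hU]
        ring_nf
      · have hmem2 : Set.Ioi t ∈ nhds s := Ioi_mem_nhds h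
        filter_upwards [hmem, hmem2] with u hu hu2
        have hU : (0 : ℝ) ≤ 1 - u ^ 2 := by nlinarith [hu.1, hu.2]
        rw [Real.sign_of_neg (by simp only [sub_neg]; exact hu2 : t - u < 0), hε,
          Real.sign_of_neg (by linarith : t - s < 0), Real.sqrt_mul hU]
        ring_nf
    have := hF.congr_of_eventuallyEq hev
    rw [← hval]
    exact this
  · -- second part
    have h := (aux_deriv t s ⟨ht1, ht2⟩ ⟨hs1, hs2⟩).div_const (Real.sqrt (1 - s ^ 2))
    have hfun : (fun v : ℝ => Real.sqrt ((1 - v ^ 2) / (1 - s ^ 2)) / (1 - s * v))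
        = fun v : ℝ => Real.sqrt (1 - v ^ 2) / (1 - v * s) / Real.sqrt (1 - s ^ 2) := by
      funext v
      rw [Real.sqrt_div' _ hS.le, mul_comm s v]
      ring
    have hval : (s - t) / (Real.sqrt ((1 - s ^ 2) * (1 - t ^ 2)) * (1 - s * t) ^ 2)
        = (s - t) / (Real.sqrt (1 - t ^ 2) * (1 - t * s) ^ 2) / Real.sqrt (1 - s ^ 2) := by
      rw [Real.sqrt_mul hS.le, mul_comm t s, div_div]
      ring_nf
    rw [hfun, hval]
    exact h
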